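/- Let F : ℝ³ → ℝ⁴ be given by F(u,v,w) = (w, u, v, -u² - 3v²/2 + u w² + v w³ - w⁴/4 + w⁵/5 - w⁶/6). Then the 3×3 Hessian matrix (h_{ij}) of F with respect to the normal ν = (-2uw - 3vw² + w³ - w⁴ + w⁵, 2u - w², 3v - w³, 1), i.e., h_{ij} = ν · ∂²F/∂x^i∂x^j with (x¹,x²,x³) = (u,v,w), has determinant h(u,v,w) = 6(2u + 6vw - w² + 4w³ - 2w⁴). -/

import Mathlib

open Matrix
/-- The standard basis vectors of ℝ³ (as ℝ×ℝ×ℝ). -/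
def e3 : Fin 3 → ℝ × ℝ × ℝ := ![(1,0,0), (0,1,0), (0,0,1)]

/-- Partial derivative of a map on ℝ³ in the i-th coordinate direction. -/
noncomputable def pd3 {X : Type*} [NormedAddCommGroup X] [NormedSpace ℝ X]
    (i : Fin 3) (f : ℝ × ℝ × ℝ → X) (p : ℝ × ℝ × ℝ) : X :=
  fderiv ℝ f p (e3 i)

namespace Stmt4Aux

noncomputable def cu : ℝ × ℝ × ℝ →L[ℝ] ℝ := ContinuousLinearMap.fst ℝ ℝ (ℝ × ℝ)
noncomputable def cv : ℝ × ℝ × ℝ →L[ℝ] ℝ :=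
  (ContinuousLinearMap.fst ℝ ℝ ℝ).comp (ContinuousLinearMap.snd ℝ ℝ (ℝ × ℝ))
noncomputable def cw : ℝ × ℝ × ℝ →L[ℝ] ℝ :=
  (ContinuousLinearMap.snd ℝ ℝ ℝ).comp (ContinuousLinearMap.snd ℝ ℝ (ℝ × ℝ))

lemma hcu (q : ℝ × ℝ × ℝ) : HasFDerivAt (fun q : ℝ × ℝ × ℝ => q.1) cu q := hasFDerivAt_fst
lemma hcv (q : ℝ × ℝ × ℝ) : HasFDerivAt (fun q : ℝ × ℝ × ℝ => q.2.1) cv q :=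
  hasFDerivAt_fst.comp q hasFDerivAt_snd
lemma hcw (q : ℝ × ℝ × ℝ) : HasFDerivAt (fun q : ℝ × ℝ × ℝ => q.2.2) cw q :=
  hasFDerivAt_snd.comp q hasFDerivAt_snd

noncomputable def D3 (q : ℝ × ℝ × ℝ) : ℝ × ℝ × ℝ →L[ℝ] ℝ :=
  (-2*q.1 + q.2.2^2) • cu + (-3*q.2.1 + q.2.2^3) • cv
    + (2*q.1*q.2.2 + 3*q.2.1*q.2.2^2 - q.2.2^3 + q.2.2^4 - q.2.2^5) • cw

lemma hD3 (q : ℝ × ℝ × ℝ) :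
    HasFDerivAt (fun p : ℝ × ℝ × ℝ =>
      -p.1^2 - 3*p.2.1^2/2 + p.1*p.2.2^2 + p.2.1*p.2.2^3
        - p.2.2^4/4 + p.2.2^5/5 - p.2.2^6/6) (D3 q) q := by
  have h :=
    ((((((((hasDerivAt_pow 2 q.1).neg).comp_hasFDerivAt q (hcu q)).sub
      ((((hasDerivAt_pow 2 q.2.1).const_mul 3).div_const 2).comp_hasFDerivAt q (hcv q))).add
      ((hcu q).mul ((hasDerivAt_pow 2 q.2.2).comp_hasFDerivAt q (hcw q)))).add
      ((hcv q).mul ((hasDerivAt_pow 3 q.2.2).comp_hasFDerivAt q (hcw q)))).sub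
      (((hasDerivAt_pow 4 q.2.2).div_const 4).comp_hasFDerivAt q (hcw q))).add
      (((hasDerivAt_pow 5 q.2.2).div_const 5).comp_hasFDerivAt q (hcw q))).sub
      (((hasDerivAt_pow 6 q.2.2).div_const 6).comp_hasFDerivAt q (hcw q))
  refine h.congr_fderiv ?_
  refine ContinuousLinearMap.ext fun x => ?_
  simp [D3, cu, cv, cw, Function.comp]
  ring

noncomputable def DF (q : ℝ × ℝ × ℝ) : Fin 4 → (ℝ × ℝ × ℝ →L[ℝ] ℝ) := ![cw, cu, cv, D3 q]

lemma hdF (q : ℝ × ℝ × ℝ) :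
    HasFDerivAt (fun p : ℝ × ℝ × ℝ =>
      (![p.2.2, p.1, p.2.1,
        -p.1^2 - 3*p.2.1^2/2 + p.1*p.2.2^2 + p.2.1*p.2.2^3
          - p.2.2^4/4 + p.2.2^5/5 - p.2.2^6/6] : Fin 4 → ℝ))
      (ContinuousLinearMap.pi (DF q)) q := by
  refine hasFDerivAt_pi'' fun i => ?_
  rw [ContinuousLinearMap.proj_pi]
  fin_cases i <;>
    simp only [DF, Matrix.cons_val_zero, Matrix.cons_val_one, Matrix.head_cons,
      Matrix.cons_val_two, Matrix.tail_cons, Matrix.cons_val_three, Fin.mk_one,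
      Fin.isValue]
  · exact hcw q
  · exact hcu q
  · exact hcv q
  · exact hD3 q

/-- the first partial derivatives of F, as closed-form maps -/
def G : Fin 3 → (ℝ × ℝ × ℝ → Fin 4 → ℝ) :=
  ![fun q => ![0, 1, 0, -2*q.1 + q.2.2^2],
    fun q => ![0, 0, 1, -3*q.2.1 + q.2.2^3],
    fun q => ![1, 0, 0, 2*q.1*q.2.2 + 3*q.2.1*q.2.2^2 - q.2.2^3 + q.2.2^4 - q.2.2^5]]

noncomputable def DG : Fin 3 → (ℝ × ℝ × ℝ) → Fin 4 → (ℝ × ℝ × ℝ →L[ℝ] ℝ) :=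
  ![fun q => ![0, 0, 0, (-2 : ℝ) • cu + (2*q.2.2) • cw],
    fun q => ![0, 0, 0, (-3 : ℝ) • cv + (3*q.2.2^2) • cw],
    fun q => ![0, 0, 0, (2*q.2.2) • cu + (3*q.2.2^2) • cv
      + (2*q.1 + 6*q.2.1*q.2.2 - 3*q.2.2^2 + 4*q.2.2^3 - 5*q.2.2^4) • cw]]

lemma hG0 (q : ℝ × ℝ × ℝ) :
    HasFDerivAt (fun q : ℝ × ℝ × ℝ => -2*q.1 + q.2.2^2)
      ((-2 : ℝ) • cu + (2*q.2.2) • cw) q := by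
  have h := ((hcu q).const_mul (-2)).add
    ((hasDerivAt_pow 2 q.2.2).comp_hasFDerivAt q (hcw q))
  refine h.congr_fderiv ?_
  refine ContinuousLinearMap.ext fun x => ?_
  simp [cu, cw]

lemma hG1 (q : ℝ × ℝ × ℝ) :
    HasFDerivAt (fun q : ℝ × ℝ × ℝ => -3*q.2.1 + q.2.2^3)
      ((-3 : ℝ) • cv + (3*q.2.2^2) • cw) q := by
  have h := ((hcv q).const_mul (-3)).add
    ((hasDerivAt_pow 3 q.2.2).comp_hasFDerivAt q (hcw q))
  refine h.congr_fderiv ?_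
  refine ContinuousLinearMap.ext fun x => ?_
  simp [cv, cw]

lemma hG2 (q : ℝ × ℝ × ℝ) :
    HasFDerivAt (fun q : ℝ × ℝ × ℝ =>
        2*q.1*q.2.2 + 3*q.2.1*q.2.2^2 - q.2.2^3 + q.2.2^4 - q.2.2^5)
      ((2*q.2.2) • cu + (3*q.2.2^2) • cv
        + (2*q.1 + 6*q.2.1*q.2.2 - 3*q.2.2^2 + 4*q.2.2^3 - 5*q.2.2^4) • cw) q := by
  have hA := ((hcu q).const_mul 2).mul (hcw q)
  have hB := ((hcv q).const_mul 3).mul ((hasDerivAt_pow 2 q.2.2).comp_hasFDerivAt q (hcw q))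
  have hC := (hasDerivAt_pow 3 q.2.2).comp_hasFDerivAt q (hcw q)
  have hD := (hasDerivAt_pow 4 q.2.2).comp_hasFDerivAt q (hcw q)
  have hE := (hasDerivAt_pow 5 q.2.2).comp_hasFDerivAt q (hcw q)
  have h := (((hA.add hB).sub hC).add hD).sub hE
  refine h.congr_fderiv ?_
  refine ContinuousLinearMap.ext fun x => ?_
  simp [cu, cv, cw]
  ring

lemma hdG (j : Fin 3) (q : ℝ × ℝ × ℝ) :
    HasFDerivAt (G j) (ContinuousLinearMap.pi (DG j q)) q := by
  fin_cases j <;>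
  · refine hasFDerivAt_pi'' fun i => ?_
    rw [ContinuousLinearMap.proj_pi]
    fin_cases i <;>
      simp only [G, DG, Matrix.cons_val_zero, Matrix.cons_val_one, Matrix.head_cons,
        Matrix.cons_val_two, Matrix.tail_cons, Matrix.cons_val_three, Fin.mk_one, Fin.isValue]
    case _ => exact hasFDerivAt_const _ _
    case _ => exact hasFDerivAt_const _ _
    case _ => exact hasFDerivAt_const _ _
    case _ => first
      | exact hG0 q
      | exact hG1 q
      | exact hG2 q

end Stmt4Aux

open Stmt4Aux in
/-- For F(u,v,w) = (w,u,v, -u² - 3v²/2 + uw² + vw³ - w⁴/4 + w⁵/5 - w⁶/6) and the normal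
    ν = (-2uw - 3vw² + w³ - w⁴ + w⁵, 2u - w², 3v - w³, 1), the Hessian matrix
    h_{ij} = ν·F_{xⁱxʲ} has determinant 6(2u + 6vw - w² + 4w³ - 2w⁴). -/
theorem stmt4
    (F : ℝ × ℝ × ℝ → Fin 4 → ℝ)
    (hF : F = fun p =>
      ![p.2.2, p.1, p.2.1,
        -p.1^2 - 3*p.2.1^2/2 + p.1*p.2.2^2 + p.2.1*p.2.2^3
          - p.2.2^4/4 + p.2.2^5/5 - p.2.2^6/6])
    (ν : ℝ × ℝ × ℝ → Fin 4 → ℝ)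
    (hν : ν = fun p =>
      ![-2*p.1*p.2.2 - 3*p.2.1*p.2.2^2 + p.2.2^3 - p.2.2^4 + p.2.2^5,
        2*p.1 - p.2.2^2, 3*p.2.1 - p.2.2^3, 1])
    (p : ℝ × ℝ × ℝ) :
    Matrix.det (Matrix.of fun i j : Fin 3 => ν p ⬝ᵥ pd3 i (pd3 j F) p)
      = 6 * (2*p.1 + 6*p.2.1*p.2.2 - p.2.2^2 + 4*p.2.2^3 - 2*p.2.2^4) := by
  have hfun : ∀ j : Fin 3, pd3 j F = G j := by
    intro j
    funext q
    rw [pd3, hF, (hdF q).fderiv]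
    fin_cases j <;> funext k <;> fin_cases k <;>
      simp [DF, G, D3, cu, cv, cw, e3, Matrix.vecHead, Matrix.vecTail] <;> ring
  have hent : ∀ i j : Fin 3, ν p ⬝ᵥ pd3 i (G j) p =
      (![![-2, 0, 2*p.2.2], ![0, -3, 3*p.2.2^2],
        ![2*p.2.2, 3*p.2.2^2,
          2*p.1 + 6*p.2.1*p.2.2 - 3*p.2.2^2 + 4*p.2.2^3 - 5*p.2.2^4]] : Fin 3 → Fin 3 → ℝ) i j := by
    intro i j
    rw [pd3, (hdG j p).fderiv, hν]
    have hpi : ∀ (D : Fin 4 → (ℝ × ℝ × ℝ →L[ℝ] ℝ)) (x : ℝ × ℝ × ℝ),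
        (ContinuousLinearMap.pi D) x = fun k => D k x := fun _ _ => rfl
    rw [hpi]
    fin_cases i <;> fin_cases j <;>
      simp only [DG, dotProduct, Fin.sum_univ_four, e3, Matrix.cons_val_zero,
        Matrix.cons_val_one, Matrix.head_cons, Matrix.cons_val_two, Matrix.tail_cons,
        Matrix.cons_val_three, Fin.mk_one, Fin.isValue, ContinuousLinearMap.add_apply,
        ContinuousLinearMap.coe_smul', Pi.smul_apply, ContinuousLinearMap.zero_apply,
        ContinuousLinearMap.comp_apply, ContinuousLinearMap.coe_fst',
        ContinuousLinearMap.coe_snd', cu, cv, cw, ContinuousLinearMap.smul_apply] <;>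
      norm_num <;> simp [Matrix.vecHead, Matrix.vecTail] <;> ring
  simp only [hfun, hent]
  rw [Matrix.det_fin_three]
  simp only [Matrix.of_apply, Matrix.cons_val_zero, Matrix.cons_val_one, Matrix.head_cons,
    Matrix.cons_val_two, Matrix.tail_cons, Matrix.head_fin_const, Fin.isValue]
  ring
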